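/- Let f : X → ℝ be p-strongly smooth (with constants L_1,…,L_p, L_1 = 1) for an integer p > 1, and let the step size η satisfy 0 < η^{1/(p-1)} ≤ min{1, 1/(2 Σ_{m=2}^p L_m/m!)}. Then the rescaled gradient descent update x_{k+1} = x_k - η^{1/(p-1)} ∇f(x_k)/‖∇f(x_k)‖^{(p-2)/(p-1)} satisfies f(x_{k+1}) - f(x_k) ≤ -(η^{1/(p-1)}/2) ‖∇f(x_k)‖^{p/(p-1)}. -/

import Mathlib

open Real

section helpers
lemma iteratedFDeriv_comp_const_add' {E F : Type*} [NormedAddCommGroup E] [NormedSpace ℝ E]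
    [NormedAddCommGroup F] [NormedSpace ℝ F] (n : ℕ) {G : E → F} (hG : ContDiff ℝ n G) (x : E) :
    (fun y => iteratedFDeriv ℝ n (fun z => G (x + z)) y)
      = fun y => iteratedFDeriv ℝ n G (x + y) := by
  induction n with
  | zero => funext y; ext m; simp
  | succ n IH =>
    funext y; ext m
    rw [iteratedFDeriv_succ_apply_left, iteratedFDeriv_succ_apply_left]
    have hd : DifferentiableAt ℝ (iteratedFDeriv ℝ n G) (x + y) :=
      (hG.differentiable_iteratedFDeriv (by exact_mod_cast Nat.lt_succ_self n)).differentiableAt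
    have h1 : HasFDerivAt (fun z : E => x + z) (ContinuousLinearMap.id ℝ E) y :=
      (hasFDerivAt_id y).const_add x
    have h2 : HasFDerivAt (fun y => iteratedFDeriv ℝ n G (x + y))
        ((fderiv ℝ (iteratedFDeriv ℝ n G) (x + y)).comp (ContinuousLinearMap.id ℝ E)) y :=
      hd.hasFDerivAt.comp y h1
    rw [show (iteratedFDeriv ℝ n fun z => G (x + z)) = fun y => iteratedFDeriv ℝ n G (x + y)
      from IH hG.of_succ, h2.fderiv]
    simp

lemma iteratedDeriv_line {X : Type*} [NormedAddCommGroup X] [NormedSpace ℝ X]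
    (n : ℕ) {f : X → ℝ} (hf : ContDiff ℝ n f) (x d : X) (t : ℝ) :
    iteratedDeriv n (fun s : ℝ => f (x + s • d)) t
      = iteratedFDeriv ℝ n f (x + t • d) (fun _ => d) := by
  set ℓ : ℝ →L[ℝ] X := ContinuousLinearMap.smulRight (ContinuousLinearMap.id ℝ ℝ) d with hℓdef
  have hℓ : ∀ s : ℝ, ℓ s = s • d := fun s => rfl
  have hcomp : (fun s : ℝ => f (x + s • d)) = (fun z => f (x + z)) ∘ ℓ := rfl
  have hG : ContDiff ℝ n (fun z : X => f (x + z)) :=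
    hf.comp (contDiff_const.add contDiff_id)
  rw [iteratedDeriv_eq_iteratedFDeriv, hcomp,
    ContinuousLinearMap.iteratedFDeriv_comp_right ℓ hG t le_rfl,
    ContinuousMultilinearMap.compContinuousLinearMap_apply,
    congrFun (iteratedFDeriv_comp_const_add' n hf x) (ℓ t)]
  simp [hℓ]
end helpers

theorem rescaled_gradient_descent_progress
    {X : Type*} [NormedAddCommGroup X] [InnerProductSpace ℝ X] [FiniteDimensional ℝ X]
    (p : ℕ) (hp : 1 < p) (f : X → ℝ) (hf : ContDiff ℝ p f)
    (L : ℕ → ℝ) (hLpos : ∀ i, 0 < L i) (hL1 : L 1 = 1)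
    (hss : ∀ x : X, ∀ m : ℕ, 1 ≤ m → m ≤ p - 1 →
      |iteratedFDeriv ℝ m f x (fun _ => gradient f x)| ≤
        L m * ‖gradient f x‖ ^ ((m : ℝ) + ((p : ℝ) - m) / ((p : ℝ) - 1)))
    (hssp : ∀ (x v : X), |iteratedFDeriv ℝ p f x (fun _ => v)| ≤ L p * ‖v‖ ^ (p : ℝ))
    (η : ℝ) (hη : 0 < η ^ (1 / ((p : ℝ) - 1)))
    (hη' : η ^ (1 / ((p : ℝ) - 1)) ≤
      min 1 (1 / (2 * ∑ m ∈ Finset.Icc 2 p, L m / (m.factorial : ℝ))))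
    (xk x1 : X)
    (hupd0 : gradient f xk = 0 → x1 = xk)
    (hupd : gradient f xk ≠ 0 → x1 = xk - (η ^ (1 / ((p : ℝ) - 1)) /
      ‖gradient f xk‖ ^ (((p : ℝ) - 2) / ((p : ℝ) - 1))) • gradient f xk) :
    f x1 - f xk ≤ -(η ^ (1 / ((p : ℝ) - 1)) / 2) *
      ‖gradient f xk‖ ^ ((p : ℝ) / ((p : ℝ) - 1)) := by
  have hp1 : (1:ℝ) < (p:ℝ) := by exact_mod_cast hp
  have hpm1 : (0:ℝ) < (p:ℝ) - 1 := by linarith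
  set E := η ^ (1 / ((p : ℝ) - 1)) with hEdef
  have hE0 : 0 < E := hη
  have hE1 : E ≤ 1 := le_trans hη' (min_le_left _ _)
  set S := ∑ m ∈ Finset.Icc 2 p, L m / (m.factorial : ℝ) with hSdef
  have hES : E ≤ 1 / (2 * S) := le_trans hη' (min_le_right _ _)
  have hPne : (p:ℝ) / ((p:ℝ) - 1) ≠ 0 := div_ne_zero (by linarith) (by linarith)
  by_cases hg0 : gradient f xk = 0
  · rw [hupd0 hg0, hg0, sub_self, norm_zero, Real.zero_rpow hPne, mul_zero]
  set g := gradient f xk with hgdef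
  set r := ‖g‖ with hrdef
  have hr : 0 < r := norm_pos_iff.mpr hg0
  set β := ((p:ℝ) - 2) / ((p:ℝ) - 1) with hβdef
  set c := E / r ^ β with hcdef
  have hrβ : 0 < r ^ β := Real.rpow_pos_of_pos hr β
  have hc : 0 < c := div_pos hE0 hrβ
  set d := -(c • g) with hddef
  have hx1 : x1 = xk + d := by rw [hupd hg0, hddef, sub_eq_add_neg]
  set P := (p:ℝ) / ((p:ℝ) - 1) with hPdef
  have hrP : (0:ℝ) ≤ r ^ P := (Real.rpow_pos_of_pos hr P).le
  have key : ∀ k : ℕ, c ^ k * r ^ ((k:ℝ) + ((p:ℝ) - k) / ((p:ℝ) - 1)) = E ^ k * r ^ P := by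
    intro k
    have h1 : c ^ k = E ^ k / r ^ (β * k) := by
      rw [hcdef, div_pow, ← Real.rpow_natCast (r ^ β) k, ← Real.rpow_mul hr.le]
    have h2 : ((k:ℝ) + ((p:ℝ) - k) / ((p:ℝ) - 1)) - β * k = P := by
      rw [hβdef, hPdef]; field_simp; ring
    rw [h1, div_mul_eq_mul_div, mul_div_assoc, ← Real.rpow_sub hr, h2]
  set G : ℝ → ℝ := fun s => f (xk + s • d) with hGdef
  have hGc : ContDiff ℝ p G := hf.comp (contDiff_const.add (contDiff_id.smul contDiff_const))
  have hline : ∀ m : ℕ, m ≤ p → ∀ t : ℝ,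
      iteratedDeriv m G t = iteratedFDeriv ℝ m f (xk + t • d) (fun _ => d) := fun m hm t =>
    iteratedDeriv_line m (hf.of_le (by exact_mod_cast hm)) xk d t
  have keyeq : ∀ m : ℕ, m ≤ p → ∀ x ∈ Set.Icc (0:ℝ) 1,
      iteratedDerivWithin m G (Set.Icc 0 1) x = iteratedDeriv m G x := by
    intro m hm x hx
    have h := ((contDiff_iff_ftaylorSeries.mp hGc).hasFTaylorSeriesUpToOn
      (Set.Icc (0:ℝ) 1)).eq_iteratedFDerivWithin_of_uniqueDiffOn (by exact_mod_cast hm)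
      (uniqueDiffOn_Icc zero_lt_one) hx
    rw [iteratedDerivWithin_eq_iteratedFDerivWithin, iteratedDeriv_eq_iteratedFDeriv, ← h]
    rfl
  have hnp : p - 1 + 1 = p := by omega
  have hCD : ContDiffOn ℝ (p - 1 : ℕ) G (Set.Icc 0 1) :=
    (hGc.of_le (by exact_mod_cast Nat.sub_le p 1)).contDiffOn
  have hdiff : DifferentiableOn ℝ (iteratedDerivWithin (p-1) G (Set.Icc 0 1)) (Set.Ioo 0 1) := by
    have h1 : Differentiable ℝ (iteratedDeriv (p-1) G) :=
      hGc.differentiable_iteratedDeriv (p-1) (by exact_mod_cast Nat.sub_lt (by omega) one_pos)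
    exact h1.differentiableOn.congr fun x hx =>
      keyeq (p-1) (Nat.sub_le p 1) x (Set.Ioo_subset_Icc_self hx)
  obtain ⟨ξ, hξ, hT⟩ := taylor_mean_remainder_lagrange (n := p - 1)
    (by norm_num : (0:ℝ) ≠ 1) (by rw [Set.uIcc_of_le zero_le_one]; exact hCD)
    (by rw [Set.uIcc_of_le zero_le_one, Set.uIoo_of_le zero_le_one]; exact hdiff)
  simp only [Set.uIcc_of_le zero_le_one, Set.uIoo_of_le zero_le_one] at hξ hT
  rw [hnp] at hT
  have hξI : ξ ∈ Set.Icc (0:ℝ) 1 := Set.Ioo_subset_Icc_self hξ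
  set A : ℕ → ℝ := fun k => iteratedFDeriv ℝ k f xk (fun _ => d) with hAdef
  set R : ℝ := iteratedFDeriv ℝ p f (xk + ξ • d) (fun _ => d) with hRdef
  have hrem : iteratedDerivWithin p G (Set.Icc 0 1) ξ = R := by
    rw [keyeq p le_rfl ξ hξI, hline p le_rfl ξ]
  have htay : taylorWithinEval G (p-1) (Set.Icc 0 1) 0 1
      = ∑ k ∈ Finset.range p, (1 / (k.factorial:ℝ)) * A k := by
    rw [taylor_within_apply, hnp]
    refine Finset.sum_congr rfl fun k hk => ?_
    rw [Finset.mem_range] at hk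
    rw [keyeq k hk.le 0 (Set.left_mem_Icc.mpr zero_le_one), hline k hk.le 0]
    simp [hAdef]
  have hG1 : G 1 = f x1 := by rw [hGdef, hx1]; simp
  have hG0 : A 0 = f xk := by simp [hAdef]
  have hEq : f x1 - f xk
      = (∑ k ∈ Finset.range p, (1/(k.factorial:ℝ)) * A k) - A 0 + R / (p.factorial : ℝ) := by
    rw [htay, hrem, hG1] at hT
    have h1 : ((1:ℝ) - 0) ^ p = 1 := by norm_num
    rw [h1, mul_one] at hT
    rw [hG0]
    linarith
  have hsplit : ∑ k ∈ Finset.range p, (1/(k.factorial:ℝ)) * A k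
      = A 0 + A 1 + ∑ k ∈ Finset.Ico 2 p, (1/(k.factorial:ℝ)) * A k := by
    rw [Finset.range_eq_Ico, Finset.sum_eq_sum_Ico_succ_bot (by omega : 0 < p),
      Finset.sum_eq_sum_Ico_succ_bot (by omega : 1 < p)]
    simp [Nat.factorial]
    ring
  have hgrad : ∀ v : X, (fderiv ℝ f xk) v = @inner ℝ X _ g v := by
    intro v
    rw [hgdef]
    exact (InnerProductSpace.toDual_symm_apply).symm
  have hA1 : A 1 = -(E * r ^ P) := by
    have h1 : A 1 = (fderiv ℝ f xk) d := by
      rw [hAdef]; exact iteratedFDeriv_one_apply _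
    have h2 : @inner ℝ X _ g d = -(c * r^(2:ℕ)) := by
      rw [hddef, inner_neg_right, real_inner_smul_right, real_inner_self_eq_norm_sq, hrdef]
    have hk1 := key 1
    have e2 : ((1:ℕ):ℝ) + ((p:ℝ) - ((1:ℕ):ℝ)) / ((p:ℝ) - 1) = ((2:ℕ):ℝ) := by
      push_cast
      rw [div_self hpm1.ne']; norm_num
    rw [e2, Real.rpow_natCast] at hk1
    rw [h1, hgrad d, h2, pow_one] at *
    rw [hk1]; ring
  have hmid : ∀ k ∈ Finset.Ico 2 p,
      (1/(k.factorial:ℝ)) * A k ≤ (L k / k.factorial) * E^k * r^P := by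
    intro k hk
    obtain ⟨hk2, hkp⟩ := Finset.mem_Ico.mp hk
    have hAk : A k = (-c)^k * iteratedFDeriv ℝ k f xk (fun _ => g) := by
      have hfun : (fun _ : Fin k => d) = fun _ : Fin k => (-c) • g := by
        funext i; rw [hddef, neg_smul]
      rw [hAdef]
      show iteratedFDeriv ℝ k f xk (fun _ => d) = _
      rw [hfun, show (fun _ : Fin k => (-c) • g) = fun i : Fin k => (-c) • (fun _ : Fin k => g) i
        from rfl, ContinuousMultilinearMap.map_smul_univ]
      simp [smul_eq_mul]
    have habs : |A k| ≤ c^k * (L k * r ^ ((k:ℝ) + ((p:ℝ) - k) / ((p:ℝ) - 1))) := by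
      rw [hAk, abs_mul, abs_pow, abs_neg, abs_of_pos hc]
      exact mul_le_mul_of_nonneg_left (hss xk k (by omega) (by omega)) (by positivity)
    have hkey : c^k * (L k * r ^ ((k:ℝ) + ((p:ℝ) - k) / ((p:ℝ) - 1)))
        = L k * (E^k * r^P) := by
      rw [← key k]; ring
    calc (1/(k.factorial:ℝ)) * A k ≤ (1/(k.factorial:ℝ)) * |A k| := by
          refine mul_le_mul_of_nonneg_left (le_abs_self _) (by positivity)
      _ ≤ (1/(k.factorial:ℝ)) * (L k * (E^k * r^P)) := by
          refine mul_le_mul_of_nonneg_left (le_trans habs (le_of_eq hkey)) (by positivity)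
      _ = (L k / k.factorial) * E^k * r^P := by ring
  have hrem2 : R / (p.factorial:ℝ) ≤ (L p / p.factorial) * E^p * r^P := by
    have h1 : |R| ≤ L p * ‖d‖ ^ ((p:ℕ):ℝ) := hssp (xk + ξ • d) d
    have hnd : ‖d‖ = c * r := by
      rw [hddef, norm_neg, norm_smul, Real.norm_eq_abs, abs_of_pos hc, hrdef]
    have hkp := key p
    have ep : ((p:ℕ):ℝ) + ((p:ℝ) - ((p:ℕ):ℝ)) / ((p:ℝ) - 1) = ((p:ℕ):ℝ) := by
      rw [sub_self, zero_div, add_zero]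
    rw [ep] at hkp
    have h2 : ‖d‖ ^ ((p:ℕ):ℝ) = E^p * r^P := by
      rw [hnd, Real.rpow_natCast (c*r) p, mul_pow, ← Real.rpow_natCast r p, hkp]
    have h3 : R ≤ L p * (E^p * r^P) := le_trans (le_abs_self R) (by rw [← h2]; exact h1)
    calc R / (p.factorial:ℝ) ≤ (L p * (E^p * r^P)) / (p.factorial:ℝ) :=
          (div_le_div_iff_of_pos_right (by exact_mod_cast p.factorial_pos : (0:ℝ) < p.factorial)).mpr h3
      _ = (L p / p.factorial) * E^p * r^P := by ring
  have hmidsum : ∑ k ∈ Finset.Ico 2 p, (1/(k.factorial:ℝ)) * A k + R / (p.factorial:ℝ)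
      ≤ ∑ k ∈ Finset.Icc 2 p, (L k / k.factorial) * E^k * r^P := by
    rw [← Finset.Ico_add_one_right_eq_Icc, Finset.sum_Ico_succ_top (by omega : 2 ≤ p)]
    exact add_le_add (Finset.sum_le_sum hmid) hrem2
  have hSbound : ∑ k ∈ Finset.Icc 2 p, (L k / k.factorial) * E^k * r^P ≤ (E/2) * r^P := by
    have hSpos : 0 < S := by
      rw [hSdef]
      refine Finset.sum_pos (fun k _ => div_pos (hLpos k)
        (by exact_mod_cast k.factorial_pos)) (Finset.nonempty_Icc.mpr (by omega))
    have h1 : ∑ k ∈ Finset.Icc 2 p, (L k / k.factorial) * E^k ≤ S * E^2 := by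
      rw [hSdef, Finset.sum_mul]
      refine Finset.sum_le_sum fun k hk => ?_
      have hk2 := (Finset.mem_Icc.mp hk).1
      exact mul_le_mul_of_nonneg_left (pow_le_pow_of_le_one hE0.le hE1 hk2)
        (div_nonneg (hLpos k).le (Nat.cast_nonneg _))
    have h2 : S * E ≤ 1/2 := by
      calc S * E ≤ S * (1/(2*S)) := mul_le_mul_of_nonneg_left hES hSpos.le
        _ = 1/2 := by field_simp
    have h3 : S * E^2 ≤ E/2 := by
      calc S * E^2 = (S*E)*E := by ring
        _ ≤ (1/2)*E := mul_le_mul_of_nonneg_right h2 hE0.le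
        _ = E/2 := by ring
    calc ∑ k ∈ Finset.Icc 2 p, (L k / k.factorial) * E^k * r^P
        = (∑ k ∈ Finset.Icc 2 p, (L k / k.factorial) * E^k) * r^P := by rw [Finset.sum_mul]
      _ ≤ (S * E^2) * r^P := mul_le_mul_of_nonneg_right h1 hrP
      _ ≤ (E/2) * r^P := mul_le_mul_of_nonneg_right h3 hrP
  have : f x1 - f xk ≤ -(E * r^P) + (E/2) * r^P := by
    rw [hEq, hsplit, hA1]
    linarith [le_trans hmidsum hSbound]
  linarith
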